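/- Let G = (V,E) be a finite connected simple graph and s ∈ V. Then the layering graph H of G with respect to s is a tree, i.e., H is connected and acyclic. -/

import Mathlib

open SimpleGraph

/-- `u` and `v` are layering-equivalent w.r.t. source `s`: they lie at the same
distance `i` from `s` and are joined by a path all of whose (intermediate)
vertices are at distance at least `i` from `s`. -/
def LayerEquiv {V : Type} (G : SimpleGraph V) (s u v : V) : Prop :=
  G.dist s u = G.dist s v ∧
    ∃ p : G.Walk u v, p.IsPath ∧ ∀ w ∈ p.support, G.dist s u ≤ G.dist s w

/-- The layering class of the vertex `v` w.r.t. source `s`. -/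
def layeringClassOf {V : Type} (G : SimpleGraph V) (s v : V) : Set V :=
  {u | LayerEquiv G s v u}

/-- `C` is a layering class of `G` w.r.t. source `s`. -/
def IsLayeringClass {V : Type} (G : SimpleGraph V) (s : V) (C : Set V) : Prop :=
  ∃ v, C = layeringClassOf G s v

/-- The layering graph `H`: vertices are the layering classes, two distinct
classes being adjacent iff `G` has an edge with one endpoint in each. -/
def layeringGraph {V : Type} (G : SimpleGraph V) (s : V) :
    SimpleGraph {C : Set V // IsLayeringClass G s C} where
  Adj C D := C ≠ D ∧ ∃ u ∈ C.1, ∃ w ∈ D.1, G.Adj u w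
  symm := by
    constructor
    rintro C D ⟨hne, u, hu, w, hw, h⟩
    exact ⟨hne.symm, w, hw, u, hu, h.symm⟩
  loopless := by constructor; rintro C ⟨hne, -⟩; exact hne rfl

namespace LayeringAux

open SimpleGraph Walk

variable {V : Type} {G : SimpleGraph V} {s u v x u' v' : V}

lemma layerEquiv_refl (G : SimpleGraph V) (s v : V) : LayerEquiv G s v v :=
  ⟨rfl, Walk.nil, Walk.IsPath.nil, by simp⟩

lemma layerEquiv_of_walk (hd : G.dist s u = G.dist s v)
    (p : G.Walk u v) (hp : ∀ w ∈ p.support, G.dist s u ≤ G.dist s w) :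
    LayerEquiv G s u v := by
  classical
  exact ⟨hd, p.bypass, p.bypass_isPath, fun w hw => hp w (p.support_bypass_subset hw)⟩

lemma layerEquiv_symm (h : LayerEquiv G s u v) : LayerEquiv G s v u := by
  obtain ⟨hd, p, hp, hsup⟩ := h
  refine ⟨hd.symm, p.reverse, hp.reverse, fun w hw => ?_⟩
  rw [← hd]
  exact hsup w (by simpa [Walk.support_reverse] using hw)

lemma layerEquiv_trans (h1 : LayerEquiv G s u v) (h2 : LayerEquiv G s v x) :
    LayerEquiv G s u x := by
  obtain ⟨hd1, p, _, hs1⟩ := h1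
  obtain ⟨hd2, q, _, hs2⟩ := h2
  refine layerEquiv_of_walk (hd1.trans hd2) (p.append q) ?_
  intro w hw
  rw [Walk.mem_support_append_iff] at hw
  rcases hw with hw | hw
  · exact hs1 w hw
  · rw [hd1]; exact hs2 w hw

lemma mem_classOf_self (G : SimpleGraph V) (s v : V) : v ∈ layeringClassOf G s v :=
  layerEquiv_refl G s v

lemma classOf_eq (h : LayerEquiv G s u v) :
    layeringClassOf G s u = layeringClassOf G s v := by
  ext y
  exact ⟨fun hy => layerEquiv_trans (layerEquiv_symm h) hy,
    fun hy => layerEquiv_trans h hy⟩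

lemma dist_le_of_adj (hG : G.Connected) (h : G.Adj u v) :
    G.dist s v ≤ G.dist s u + 1 := by
  obtain ⟨p, hp⟩ := (hG s u).exists_walk_length_eq_dist
  calc G.dist s v ≤ (p.concat h).length := SimpleGraph.dist_le _
    _ = G.dist s u + 1 := by rw [Walk.length_concat, hp]

lemma exists_concat_decomp {y z : V} (p : G.Walk y z) (h : 0 < p.length) :
    ∃ (w : V) (q : G.Walk y w) (e : G.Adj w z), p = q.concat e := by
  cases p with
  | nil => simp at h
  | cons ha q =>
    obtain ⟨w, q', e, hq⟩ := Walk.exists_cons_eq_concat ha q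
    exact ⟨w, q', e, hq⟩

lemma exists_parent (hG : G.Connected) (hv : 0 < G.dist s v) :
    ∃ u, G.Adj u v ∧ G.dist s u + 1 = G.dist s v := by
  obtain ⟨p, hp⟩ := (hG s v).exists_walk_length_eq_dist
  obtain ⟨w, q, e, rfl⟩ := exists_concat_decomp p (by omega)
  refine ⟨w, e, ?_⟩
  have h1 : G.dist s w ≤ q.length := SimpleGraph.dist_le q
  have h2 : G.dist s v ≤ G.dist s w + 1 := dist_le_of_adj hG e
  rw [Walk.length_concat] at hp
  omega

lemma layerEquiv_of_adj_same_dist (h : G.Adj u v) (hd : G.dist s u = G.dist s v) :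
    LayerEquiv G s u v := by
  refine layerEquiv_of_walk hd (Walk.cons h Walk.nil) ?_
  intro w hw
  simp only [Walk.support_cons, Walk.support_nil, List.mem_cons, List.mem_singleton] at hw
  rcases hw with rfl | rfl | h
  · exact le_refl _
  · exact le_of_eq hd
  · simp at h

lemma layerEquiv_parent (hG : G.Connected) (h : LayerEquiv G s u v)
    (hu : G.Adj u' u) (hv : G.Adj v' v)
    (hu' : G.dist s u' < G.dist s u) (hv' : G.dist s v' < G.dist s v) :
    LayerEquiv G s u' v' := by
  obtain ⟨hd, p, _, hsup⟩ := h
  have h1 : G.dist s u ≤ G.dist s u' + 1 := dist_le_of_adj hG hu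
  have h2 : G.dist s v ≤ G.dist s v' + 1 := dist_le_of_adj hG hv
  have hdu : G.dist s u' + 1 = G.dist s u := by omega
  have hdv : G.dist s v' + 1 = G.dist s v := by omega
  refine layerEquiv_of_walk (by omega) (Walk.cons hu (p.append (Walk.cons hv.symm Walk.nil))) ?_
  intro w hw
  simp only [Walk.support_cons, List.mem_cons] at hw
  rcases hw with rfl | hw
  · exact le_refl _
  rw [Walk.mem_support_append_iff] at hw
  rcases hw with hw | hw
  · have := hsup w hw; omega
  · simp only [Walk.support_cons, Walk.support_nil, List.mem_cons, List.mem_singleton] at hw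
    rcases hw with rfl | rfl | h
    · omega
    · omega
    · simp at h

/-- The layer (distance from `s`) of a layering class. -/
noncomputable def layerOf (C : {C : Set V // IsLayeringClass G s C}) : ℕ :=
  G.dist s C.2.choose

lemma layerOf_spec (C : {C : Set V // IsLayeringClass G s C}) :
    C.1 = layeringClassOf G s C.2.choose := C.2.choose_spec

lemma mem_rep (C : {C : Set V // IsLayeringClass G s C}) : C.2.choose ∈ C.1 := by
  set v0 := C.2.choose with hv
  have h : C.1 = layeringClassOf G s v0 := layerOf_spec C
  rw [h]
  exact mem_classOf_self G s v0

lemma dist_eq_layerOf {C : {C : Set V // IsLayeringClass G s C}} (hu : u ∈ C.1) :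
    G.dist s u = layerOf C := by
  have h := layerOf_spec C
  rw [h] at hu
  exact (hu : LayerEquiv G s _ u).1.symm

lemma class_eq_classOf {C : {C : Set V // IsLayeringClass G s C}} (hu : u ∈ C.1) :
    C.1 = layeringClassOf G s u := by
  have h := layerOf_spec C
  rw [h] at hu ⊢
  exact classOf_eq (hu : LayerEquiv G s _ u)

lemma adj_layer (hG : G.Connected) {C D : {C : Set V // IsLayeringClass G s C}}
    (h : (layeringGraph G s).Adj C D) :
    layerOf C + 1 = layerOf D ∨ layerOf D + 1 = layerOf C := by
  obtain ⟨hne, u, hu, w, hw, huw⟩ := h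
  have hdu : G.dist s u = layerOf C := dist_eq_layerOf hu
  have hdw : G.dist s w = layerOf D := dist_eq_layerOf hw
  have h1 : G.dist s w ≤ G.dist s u + 1 := dist_le_of_adj hG huw
  have h2 : G.dist s u ≤ G.dist s w + 1 := dist_le_of_adj hG huw.symm
  by_cases heq : G.dist s u = G.dist s w
  · exfalso
    apply hne
    apply Subtype.ext
    rw [class_eq_classOf hu, class_eq_classOf hw]
    exact classOf_eq (layerEquiv_of_adj_same_dist huw heq)
  · omega

lemma parent_unique (hG : G.Connected) {C D D' : {C : Set V // IsLayeringClass G s C}}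
    (h1 : (layeringGraph G s).Adj D C) (h2 : (layeringGraph G s).Adj D' C)
    (l1 : layerOf D < layerOf C) (l2 : layerOf D' < layerOf C) : D = D' := by
  obtain ⟨-, u, hu, w, hw, huw⟩ := h1
  obtain ⟨-, u', hu', w', hw', huw'⟩ := h2
  have hww' : LayerEquiv G s w w' := by
    have e1 := class_eq_classOf hw
    rw [e1] at hw'
    exact hw'
  have hdu : G.dist s u = layerOf D := dist_eq_layerOf hu
  have hdu' : G.dist s u' = layerOf D' := dist_eq_layerOf hu'
  have hdw : G.dist s w = layerOf C := dist_eq_layerOf hw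
  have hdw' : G.dist s w' = layerOf C := dist_eq_layerOf hw'
  have key : LayerEquiv G s u u' :=
    layerEquiv_parent hG hww' huw huw' (by omega) (by omega)
  apply Subtype.ext
  rw [class_eq_classOf hu, class_eq_classOf hu']
  exact classOf_eq key

lemma loop_eq_nil {A : Type} {Gr : SimpleGraph A} {y : A} (w : Gr.Walk y y)
    (h : w.support.Nodup) : w = Walk.nil := by
  cases w with
  | nil => rfl
  | cons ha q =>
    exfalso
    rw [Walk.support_cons, List.nodup_cons] at h
    exact h.1 q.end_mem_support

lemma no_max_cycle (hG : G.Connected) (M : {C : Set V // IsLayeringClass G s C})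
    (c : (layeringGraph G s).Walk M M) (hc : c.IsCycle)
    (hmax : ∀ x ∈ c.support, layerOf x ≤ layerOf M) : False := by
  cases c with
  | nil => exact hc.ne_nil rfl
  | @cons _ B _ h1 q =>
    -- h1 : Adj M B, q : Walk B M
    have hlen : 3 ≤ (Walk.cons h1 q).length := hc.three_le_length
    rw [Walk.length_cons] at hlen
    obtain ⟨B2, w, e, hq⟩ := exists_concat_decomp q (by omega)
    have hnodup : q.support.Nodup := by
      have h := hc.support_nodup
      rwa [Walk.support_cons, List.tail_cons] at h
    have hqsup : q.support = w.support ++ [M] := by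
      rw [hq, Walk.support_concat]
    have hBmem : B ∈ (Walk.cons h1 q).support := by
      rw [Walk.support_cons]
      exact List.mem_cons_of_mem _ q.start_mem_support
    have hB2mem : B2 ∈ (Walk.cons h1 q).support := by
      rw [Walk.support_cons]
      apply List.mem_cons_of_mem
      rw [hqsup]
      exact List.mem_append_left _ w.end_mem_support
    have hB : layerOf B + 1 = layerOf M := by
      rcases adj_layer hG h1 with h | h
      · have := hmax _ hBmem; omega
      · exact h
    have hB2 : layerOf B2 + 1 = layerOf M := by
      rcases adj_layer hG e with h | h
      · exact h
      · have := hmax _ hB2mem; omega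
    have hBB2 : B = B2 :=
      parent_unique hG h1.symm e (by omega) (by omega)
    subst hBB2
    -- now w : Walk B B
    have hwnodup : w.support.Nodup := by
      rw [hqsup] at hnodup
      exact hnodup.of_append_left
    have hwnil : w = Walk.nil := loop_eq_nil w hwnodup
    rw [hwnil] at hq
    have : q.length = 1 := by rw [hq, Walk.length_concat]; rfl
    omega

/-- Reaching the root class. -/
lemma reach_root (hG : G.Connected) (s : V) :
    ∀ (n : ℕ) (C : {C : Set V // IsLayeringClass G s C}), layerOf C = n →
      (layeringGraph G s).Reachable C ⟨layeringClassOf G s s, s, rfl⟩ := by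
  intro n
  induction n using Nat.strong_induction_on with
  | _ n ih =>
    intro C hC
    rcases Nat.eq_zero_or_pos n with rfl | hpos
    · have hd0 : G.dist s C.2.choose = 0 := by
        rw [dist_eq_layerOf (mem_rep C), hC]
      have hs : s = C.2.choose := ((hG s _).dist_eq_zero_iff).mp hd0
      have : C = ⟨layeringClassOf G s s, s, rfl⟩ := by
        apply Subtype.ext
        rw [layerOf_spec C, ← hs]
      rw [this]
    · have hd : G.dist s C.2.choose = n := by
        rw [dist_eq_layerOf (mem_rep C), hC]
      have hpos' : 0 < G.dist s C.2.choose := by omega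
      obtain ⟨u, hadj, hu⟩ := exists_parent hG hpos'
      set D : {C : Set V // IsLayeringClass G s C} := ⟨layeringClassOf G s u, u, rfl⟩ with hD
      have hDmem : u ∈ D.1 := mem_classOf_self G s u
      have hDl : layerOf D = G.dist s u := (dist_eq_layerOf hDmem).symm
      have hne : D ≠ C := by
        intro heq
        rw [heq] at hDl
        rw [hC] at hDl
        omega
      have hAdj : (layeringGraph G s).Adj D C :=
        ⟨hne, u, hDmem, C.2.choose, mem_rep C, hadj⟩
      exact hAdj.symm.reachable.trans (ih (G.dist s u) (by omega) D hDl)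

end LayeringAux

/-- Let `G` be a finite connected simple graph and `s` a vertex.
Then the layering graph `H` of `G` with respect to `s` is a tree. -/
theorem layeringGraph_isTree {V : Type} [Fintype V]
    (G : SimpleGraph V) (hG : G.Connected) (s : V) :
    (layeringGraph G s).IsTree := by
  classical
  open LayeringAux in
  constructor
  · -- connected
    refine { preconnected := fun C D => ?_,
             nonempty := ⟨⟨layeringClassOf G s s, s, rfl⟩⟩ }
    exact (reach_root hG s _ C rfl).trans (reach_root hG s _ D rfl).symm
  · -- acyclic
    intro C0 c hc
    have hC0 : C0 ∈ c.support.toFinset := by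
      simp [Walk.start_mem_support]
    obtain ⟨M, hM, hmax⟩ :=
      Finset.exists_max_image c.support.toFinset layerOf ⟨C0, hC0⟩
    rw [List.mem_toFinset] at hM
    refine no_max_cycle hG M (c.rotate M hM) (hc.rotate hM) ?_
    intro x hx
    rw [Walk.support_eq_cons, List.mem_cons] at hx
    rcases hx with rfl | hx
    · exact le_refl _
    · have hx' : x ∈ c.support.tail :=
        ((Walk.support_rotate c M hM).mem_iff).mp hx
      exact hmax x (by rw [List.mem_toFinset]; exact List.mem_of_mem_tail hx')
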